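/- For every real number p with 1/2 < p < 1, there exist positive real numbers a, b with a ≠ b such that T(a,b) > C̄(p·a + (1−p)·b, p·b + (1−p)·a); that is, β = 1 is the only value of the parameter in [1/2, 1] for which the upper bound T(a,b) < C̄(β·a + (1−β)·b, β·b + (1−β)·a) holds for all a ≠ b. -/

import Mathlib

open Real

/-- The Seiffert mean of two positive reals. -/
noncomputable def seiffertT (a b : ℝ) : ℝ := (a - b) / (2 * Real.arctan ((a - b) / (a + b)))

/-- The centroidal mean of two positive reals. -/
noncomputable def centroidalMean (a b : ℝ) : ℝ := 2 * (a ^ 2 + a * b + b ^ 2) / (3 * (a + b))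

lemma arctan_lt_poly {x : ℝ} (hx : 0 < x) :
    Real.arctan x < x - x ^ 3 / 3 + x ^ 5 / 5 := by
  have key : StrictMonoOn (fun y : ℝ => y - y ^ 3 / 3 + y ^ 5 / 5 - Real.arctan y)
      (Set.Ici 0) := by
    apply strictMonoOn_of_deriv_pos (convex_Ici 0)
    · exact (((continuous_id.sub ((continuous_pow 3).div_const 3)).add
        ((continuous_pow 5).div_const 5)).sub Real.continuous_arctan).continuousOn
    · intro y hy
      rw [interior_Ici] at hy
      have hd : HasDerivAt (fun y : ℝ => y - y ^ 3 / 3 + y ^ 5 / 5 - Real.arctan y)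
          (1 - (3 : ℕ) * y ^ 2 / 3 + (5 : ℕ) * y ^ 4 / 5 - 1 / (1 + y ^ 2)) y := by
        have h1 := Real.hasDerivAt_arctan y
        have h2 : HasDerivAt (fun y : ℝ => y - y ^ 3 / 3 + y ^ 5 / 5)
            (1 - (3 : ℕ) * y ^ 2 / 3 + (5 : ℕ) * y ^ 4 / 5) y := by
          have h3 := (((hasDerivAt_id y).sub ((hasDerivAt_pow 3 y).div_const 3)).add
            ((hasDerivAt_pow 5 y).div_const 5))
          convert h3 using 1
          all_goals rfl
        exact h2.sub h1
      rw [hd.deriv]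
      have h1 : (0 : ℝ) < 1 + y ^ 2 := by positivity
      have h2 : (1 : ℝ) / (1 + y ^ 2) < 1 - (3 : ℕ) * y ^ 2 / 3 + (5 : ℕ) * y ^ 4 / 5 := by
        rw [div_lt_iff₀ h1]
        push_cast
        nlinarith [pow_pos (show (0:ℝ) < y from hy) 6]
      linarith
  have h0 : (0 : ℝ) ∈ Set.Ici (0 : ℝ) := Set.self_mem_Ici
  have hx' : x ∈ Set.Ici (0 : ℝ) := le_of_lt hx
  have h := key h0 hx' hx
  simp only [Real.arctan_zero] at h
  norm_num at h
  linarith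

set_option maxHeartbeats 1000000 in
theorem stmt_3 (p : ℝ) (hp₁ : 1 / 2 < p) (hp₂ : p < 1) :
    ∃ a b : ℝ, 0 < a ∧ 0 < b ∧ a ≠ b ∧
      seiffertT a b > centroidalMean (p * a + (1 - p) * b) (p * b + (1 - p) * a) := by
  obtain ⟨q, hq⟩ : ∃ q : ℝ, q = 2 * p - 1 := ⟨_, rfl⟩
  have hq0 : 0 < q := by rw [hq]; linarith
  have hq1 : q < 1 := by rw [hq]; linarith
  obtain ⟨t, ht⟩ : ∃ t : ℝ, t = (1 - q ^ 2) / 2 := ⟨_, rfl⟩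
  have ht0 : 0 < t := by rw [ht]; nlinarith
  have ht12 : t ≤ 1 / 2 := by rw [ht]; nlinarith
  refine ⟨1 + t, 1 - t, by linarith, by linarith, by intro h; linarith, ?_⟩
  have hinner : ((1 + t) - (1 - t)) / ((1 + t) + (1 - t)) = t := by ring
  have harg1 : p * (1 + t) + (1 - p) * (1 - t) = 1 + q * t := by rw [hq]; ring
  have harg2 : p * (1 - t) + (1 - p) * (1 + t) = 1 - q * t := by rw [hq]; ring
  rw [harg1, harg2, seiffertT, centroidalMean, hinner]
  have hden : (1 + q * t) + (1 - q * t) = 2 := by ring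
  have hC : 2 * ((1 + q * t) ^ 2 + (1 + q * t) * (1 - q * t) + (1 - q * t) ^ 2) /
      (3 * ((1 + q * t) + (1 - q * t))) = 1 + q ^ 2 * t ^ 2 / 3 := by
    rw [hden]; ring
  rw [hC]
  have hat : 0 < Real.arctan t := by
    rw [← Real.arctan_zero]; exact Real.arctan_strictMono ht0
  rw [gt_iff_lt, lt_div_iff₀ (by positivity)]
  have hA := arctan_lt_poly ht0
  have hfac : (0 : ℝ) < 1 + q ^ 2 * t ^ 2 / 3 := by positivity
  have step1 : (1 + q ^ 2 * t ^ 2 / 3) * (2 * Real.arctan t) <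
      (1 + q ^ 2 * t ^ 2 / 3) * (2 * (t - t ^ 3 / 3 + t ^ 5 / 5)) := by
    apply mul_lt_mul_of_pos_left _ hfac
    linarith
  have ht2 : t ^ 2 ≤ (1 - q ^ 2) / 4 := by nlinarith
  have hq2 : q ^ 2 ≤ 1 := by nlinarith
  have ht1 : t ≤ 1 := by linarith
  have key : 4 * t ^ 5 / 5 ≤ t ^ 3 * (1 - q ^ 2) := by
    nlinarith [pow_pos ht0 3, mul_le_mul_of_nonneg_left ht2 (pow_pos ht0 3).le]
  have h7 : q ^ 2 * t ^ 7 ≤ t ^ 5 := by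
    have h75 : t ^ 7 ≤ t ^ 5 := pow_le_pow_of_le_one ht0.le ht1 (by norm_num)
    have h70 : (0 : ℝ) ≤ t ^ 7 := by positivity
    nlinarith [mul_le_mul_of_nonneg_right hq2 h70]
  have h5 : 0 ≤ q ^ 2 * t ^ 5 := by positivity
  have e : (3 + q ^ 2 * t ^ 2) * (t - t ^ 3 / 3 + t ^ 5 / 5) =
      3 * t - t ^ 3 * (1 - q ^ 2) + 3 / 5 * t ^ 5 - q ^ 2 * t ^ 5 / 3 + q ^ 2 * t ^ 7 / 5 := by
    ring
  have step2 : (3 + q ^ 2 * t ^ 2) * (t - t ^ 3 / 3 + t ^ 5 / 5) ≤ 3 * t := by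
    rw [e]; linarith
  have e2 : (1 + q ^ 2 * t ^ 2 / 3) * (2 * (t - t ^ 3 / 3 + t ^ 5 / 5)) =
      2 / 3 * ((3 + q ^ 2 * t ^ 2) * (t - t ^ 3 / 3 + t ^ 5 / 5)) := by ring
  linarith
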